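/- Shifting one point's assignment between two clusters a and b by α ∈ (0,1], where the point x_g satisfies D(x_g, c_a) = D(x_g, c_b) but x_g ≠ c_a and x_g ≠ c_b, strictly decreases the clustering loss: F(P^new) − F(P) = −((s_a − α w_g) D(c'_a, c_a) + (s_b + α w_g) D(c'_b, c_b)) < 0, since the new centers c'_a ≠ c_a and c'_b ≠ c_b. -/

import Mathlib

open Finset Topology Filter

lemma grad_le_aux {d : ℕ} {dom : Set (Fin d → ℝ)}
    {φ : (Fin d → ℝ) → ℝ} (hφ : ConvexOn ℝ dom φ)
    {v : Fin d → ℝ} {L : (Fin d → ℝ) →L[ℝ] ℝ} (hL : HasFDerivAt φ L v)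
    (hv : v ∈ dom) {u : Fin d → ℝ} (hu : u ∈ dom) :
    L (u - v) ≤ φ u - φ v := by
  set h : ℝ → ℝ := fun t => φ (v + t • (u - v)) with hh_def
  have hline : HasDerivAt (fun t : ℝ => v + t • (u - v)) (u - v) 0 := by
    simpa using ((hasDerivAt_id (0:ℝ)).smul_const (u - v)).const_add v
  have hL0 : HasFDerivAt φ L ((fun t : ℝ => v + t • (u - v)) 0) := by simpa using hL
  have hh : HasDerivAt h (L (u - v)) 0 := by
    have := hL0.comp_hasDerivAt 0 hline
    exact this
  have hsl : ∀ t ∈ Set.Ioc (0:ℝ) 1, slope h 0 t ≤ φ u - φ v := by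
    intro t ht
    have ht0 := ht.1
    have hmem : v + t • (u - v) = (1 - t) • v + t • u := by
      funext i; simp [smul_sub]; ring
    have hconv : φ ((1 - t) • v + t • u) ≤ (1 - t) * φ v + t * φ u :=
      hφ.2 hv hu (by linarith [ht.2]) ht0.le (by ring)
    have hdiff : h t - h 0 ≤ t * (φ u - φ v) := by
      have h0 : h 0 = φ v := by simp [hh_def]
      have h1 : h t = φ ((1 - t) • v + t • u) := by rw [hh_def]; simp [hmem]
      rw [h0, h1]; nlinarith [hconv]
    rw [slope_def_field, sub_zero, div_le_iff₀ ht0]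
    calc h t - h 0 ≤ t * (φ u - φ v) := hdiff
      _ = (φ u - φ v) * t := by ring
  have htend : Filter.Tendsto (slope h 0) (𝓝[>] (0:ℝ)) (𝓝 (L (u - v))) :=
    (hasDerivAt_iff_tendsto_slope.mp hh).mono_left
      (nhdsWithin_mono _ (fun x hx => ne_of_gt hx))
  exact le_of_tendsto htend
    (Filter.eventually_iff_exists_mem.mpr ⟨Set.Ioc 0 1,
      Ioc_mem_nhdsGT_of_mem ⟨le_rfl, zero_lt_one⟩, hsl⟩)

lemma bregman_pos_aux {d : ℕ} {dom : Set (Fin d → ℝ)} (hdom : Convex ℝ dom)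
    {φ : (Fin d → ℝ) → ℝ} (hφ : StrictConvexOn ℝ dom φ)
    {v u : Fin d → ℝ} {L : (Fin d → ℝ) →L[ℝ] ℝ} (hL : HasFDerivAt φ L v)
    (hv : v ∈ dom) (hu : u ∈ dom) (hne : u ≠ v) :
    0 < φ u - φ v - L (u - v) := by
  set m : Fin d → ℝ := (1/2 : ℝ) • u + (1/2 : ℝ) • v with hm_def
  have hm : m ∈ dom := hdom hu hv (by norm_num) (by norm_num) (by norm_num)
  have hstrict : φ m < (1/2 : ℝ) * φ u + (1/2 : ℝ) * φ v :=
    hφ.2 hu hv hne (by norm_num) (by norm_num) (by norm_num)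
  have hgrad : L (m - v) ≤ φ m - φ v := grad_le_aux hφ.convexOn hL hv hm
  have hmv : m - v = (1/2 : ℝ) • (u - v) := by
    funext i; simp [hm_def, smul_sub]; ring
  have hLm : L (m - v) = (1/2 : ℝ) * L (u - v) := by
    rw [hmv, map_smul]; simp
  rw [hLm] at hgrad
  linarith

lemma center_split_aux {d N : ℕ} (φ : (Fin d → ℝ) → ℝ)
    (f' : (Fin d → ℝ) → (Fin d → ℝ) →L[ℝ] ℝ)
    (D : (Fin d → ℝ) → (Fin d → ℝ) → ℝ)
    (hD : ∀ x y, D x y = φ x - φ y - f' y (x - y))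
    (x : Fin N → (Fin d → ℝ)) (q : Fin N → ℝ)
    (S : ℝ) (hS : S = ∑ n, q n)
    (c : Fin d → ℝ) (hc : S • c = ∑ n, q n • x n) (y : Fin d → ℝ) :
    ∑ n, q n * D (x n) y = (∑ n, q n * D (x n) c) + S * D c y := by
  have expand : ∀ z, ∑ n, q n * D (x n) z
      = (∑ n, q n * φ (x n)) - S * φ z - (S * f' z c - S * f' z z) := by
    intro z
    have h1 : ∑ n, q n * (f' z) (x n - z) = S * f' z c - S * f' z z := by
      calc ∑ n, q n * (f' z) (x n - z) = ∑ n, (f' z) (q n • (x n - z)) := by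
            simp [map_smul]
        _ = (f' z) (∑ n, q n • (x n - z)) := (map_sum (f' z) _ _).symm
        _ = (f' z) (S • c - S • z) := by
            rw [show (∑ n, q n • (x n - z)) = S • c - S • z from by
              simp only [smul_sub, Finset.sum_sub_distrib, ← hc, ← Finset.sum_smul, ← hS]]
        _ = S * f' z c - S * f' z z := by
            rw [map_sub, map_smul, map_smul]; simp
    simp only [hD, mul_sub]
    rw [Finset.sum_sub_distrib, Finset.sum_sub_distrib, ← Finset.sum_mul, ← hS, h1]
  have hmap : (f' y) (c - y) = f' y c - f' y y := map_sub _ _ _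
  rw [expand y, expand c, hD c y, hmap]
  ring

/-- Shifting a point `x g` between clusters `a` and `b` by `α ∈ (0,1]`,
when `D(x_g, c_a) = D(x_g, c_b)` but `x_g ≠ c_a` and `x_g ≠ c_b`, strictly decreases
the clustering loss:
`F(P^new) − F(P) = −((s_a − α w_g) D(c'_a, c_a) + (s_b + α w_g) D(c'_b, c_b)) < 0`. -/
theorem tie_shift_strictly_decreases {d K N : ℕ}
    (dom : Set (Fin d → ℝ)) (hdom : Convex ℝ dom)
    (φ : (Fin d → ℝ) → ℝ) (hφ : StrictConvexOn ℝ dom φ)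
    (f' : (Fin d → ℝ) → (Fin d → ℝ) →L[ℝ] ℝ)
    (hdiff : ∀ y ∈ interior dom, HasFDerivAt φ (f' y) y)
    (D : (Fin d → ℝ) → (Fin d → ℝ) → ℝ)
    (hD : ∀ x y, D x y = φ x - φ y - f' y (x - y))
    (x : Fin N → (Fin d → ℝ)) (hx : ∀ n, x n ∈ interior dom)
    (w : Fin N → ℝ) (hw : ∀ n, 0 < w n)
    (P : Fin K → Fin N → ℝ) (hP : ∀ k n, 0 ≤ P k n)
    (g : Fin N) (a b : Fin K) (hab : a ≠ b)
    (α : ℝ) (hα0 : 0 < α) (hα1 : α ≤ 1) (hαg : α ≤ P a g)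
    (Pnew : Fin K → Fin N → ℝ)
    (hPnew : ∀ k n, Pnew k n =
      if k = a ∧ n = g then P k n - α
      else if k = b ∧ n = g then P k n + α
      else P k n)
    (s : (Fin K → Fin N → ℝ) → Fin K → ℝ)
    (hs : ∀ Q k, s Q k = ∑ n, Q k n * w n)
    (cstar : (Fin K → Fin N → ℝ) → Fin K → (Fin d → ℝ))
    (hcstar : ∀ Q k, cstar Q k = (s Q k)⁻¹ • ∑ n, (Q k n * w n) • x n)
    (F : (Fin K → Fin N → ℝ) → ℝ)
    (hF : ∀ Q, F Q = ∑ k, ∑ n, Q k n * w n * D (x n) (cstar Q k))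
    (hpos : ∀ k, 0 < s P k) (hposa : 0 < s P a - α * w g)
    (hmeans : ∀ k, cstar P k ∈ interior dom ∧ cstar Pnew k ∈ interior dom)
    (htie : D (x g) (cstar P a) = D (x g) (cstar P b))
    (hga : x g ≠ cstar P a) (hgb : x g ≠ cstar P b) :
    F Pnew - F P =
      -((s P a - α * w g) * D (cstar Pnew a) (cstar P a)
        + (s P b + α * w g) * D (cstar Pnew b) (cstar P b)) ∧
    F Pnew < F P := by
  have hwg : 0 < w g := hw g
  have hba : b ≠ a := hab.symm
  -- pointwise descriptions of Pnew
  have hPa : ∀ n, Pnew a n = P a n - (if n = g then α else 0) := by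
    intro n; rw [hPnew]; by_cases h : n = g <;> simp [h]
  have hPb : ∀ n, Pnew b n = P b n + (if n = g then α else 0) := by
    intro n; rw [hPnew]; by_cases h : n = g <;> simp [h, hba]
  have hPother : ∀ k, k ≠ a → k ≠ b → ∀ n, Pnew k n = P k n := by
    intro k hka hkb n; rw [hPnew]; simp [hka, hkb]
  -- weight sums
  have hsa : s Pnew a = s P a - α * w g := by
    rw [hs, hs]
    have : ∀ n, Pnew a n * w n = P a n * w n - (if n = g then α * w n else 0) := by
      intro n; rw [hPa]; by_cases h : n = g <;> simp [h, sub_mul]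
    simp only [this]
    rw [Finset.sum_sub_distrib]
    congr 1
    simp
  have hsb : s Pnew b = s P b + α * w g := by
    rw [hs, hs]
    have : ∀ n, Pnew b n * w n = P b n * w n + (if n = g then α * w n else 0) := by
      intro n; rw [hPb]; by_cases h : n = g <;> simp [h, add_mul]
    simp only [this]
    rw [Finset.sum_add_distrib]
    congr 1
    simp
  have hsother : ∀ k, k ≠ a → k ≠ b → s Pnew k = s P k := by
    intro k hka hkb
    rw [hs, hs]
    exact Finset.sum_congr rfl fun n _ => by rw [hPother k hka hkb]
  have hcother : ∀ k, k ≠ a → k ≠ b → cstar Pnew k = cstar P k := by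
    intro k hka hkb
    rw [hcstar, hcstar, hsother k hka hkb]
    congr 1
    exact Finset.sum_congr rfl fun n _ => by rw [hPother k hka hkb]
  have hsa_pos : 0 < s Pnew a := by rw [hsa]; exact hposa
  have hsb_pos : 0 < s Pnew b := by
    rw [hsb]; have := hpos b; nlinarith
  have hsk_pos : ∀ k, 0 < s Pnew k := by
    intro k
    by_cases hka : k = a
    · subst hka; exact hsa_pos
    by_cases hkb : k = b
    · subst hkb; exact hsb_pos
    · rw [hsother k hka hkb]; exact hpos k
  -- center identities
  have hCs : ∀ (Q : Fin K → Fin N → ℝ) (k : Fin K), s Q k ≠ 0 →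
      (s Q k) • cstar Q k = ∑ n, (Q k n * w n) • x n := by
    intro Q k h
    rw [hcstar, smul_smul, mul_inv_cancel₀ h, one_smul]
  -- shifted vector sums
  have hVa : ∑ n, (Pnew a n * w n) • x n
      = (∑ n, (P a n * w n) • x n) - (α * w g) • x g := by
    have : ∀ n, (Pnew a n * w n) • x n
        = (P a n * w n) • x n - (if n = g then (α * w n) • x n else 0) := by
      intro n; rw [hPa]; by_cases h : n = g <;> simp [h, sub_mul, sub_smul]
    simp only [this]
    rw [Finset.sum_sub_distrib]
    congr 1
    simp
  have hVb : ∑ n, (Pnew b n * w n) • x n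
      = (∑ n, (P b n * w n) • x n) + (α * w g) • x g := by
    have : ∀ n, (Pnew b n * w n) • x n
        = (P b n * w n) • x n + (if n = g then (α * w n) • x n else 0) := by
      intro n; rw [hPb]; by_cases h : n = g <;> simp [h, add_mul, add_smul]
    simp only [this]
    rw [Finset.sum_add_distrib]
    congr 1
    simp
  -- new centers differ from old
  have hDa_pos : 0 < D (cstar Pnew a) (cstar P a) := by
    have hne : cstar Pnew a ≠ cstar P a := by
      intro h
      have e1 := hCs Pnew a (ne_of_gt hsa_pos)
      have e2 := hCs P a (ne_of_gt (hpos a))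
      rw [h, hsa, hVa, ← e2] at e1
      have h2 : s P a • cstar P a - (α * w g) • cstar P a
          = s P a • cstar P a - (α * w g) • x g := by
        rw [← sub_smul]; exact e1
      have h3 : (α * w g) • cstar P a = (α * w g) • x g := sub_right_injective h2
      have h4 : cstar P a = x g :=
        smul_right_injective _ (by positivity) h3
      exact hga h4.symm
    have := bregman_pos_aux hdom hφ (hdiff _ (hmeans a).1)
      (interior_subset (hmeans a).1) (interior_subset (hmeans a).2) hne
    rw [hD]; exact this
  have hDb_pos : 0 < D (cstar Pnew b) (cstar P b) := by
    have hne : cstar Pnew b ≠ cstar P b := by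
      intro h
      have e1 := hCs Pnew b (ne_of_gt hsb_pos)
      have e2 := hCs P b (ne_of_gt (hpos b))
      rw [h, hsb, hVb, ← e2] at e1
      have h2 : s P b • cstar P b + (α * w g) • cstar P b
          = s P b • cstar P b + (α * w g) • x g := by
        rw [← add_smul]; exact e1
      have h3 : (α * w g) • cstar P b = (α * w g) • x g := add_left_cancel h2
      have h4 : cstar P b = x g :=
        smul_right_injective _ (by positivity) h3
      exact hgb h4.symm
    have := bregman_pos_aux hdom hφ (hdiff _ (hmeans b).1)
      (interior_subset (hmeans b).1) (interior_subset (hmeans b).2) hne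
    rw [hD]; exact this
  have hDzero : ∀ c, D c c = 0 := by intro c; rw [hD]; simp
  -- the Bregman center splitting identity per cluster
  have hsplit : ∀ k, ∑ n, Pnew k n * w n * D (x n) (cstar P k)
      = (∑ n, Pnew k n * w n * D (x n) (cstar Pnew k))
        + s Pnew k * D (cstar Pnew k) (cstar P k) := by
    intro k
    exact center_split_aux φ f' D hD x (fun n => Pnew k n * w n) (s Pnew k)
      (hs Pnew k) (cstar Pnew k) (hCs Pnew k (ne_of_gt (hsk_pos k))) (cstar P k)
  -- cross term equals F P
  have hrow : ∀ k, ∑ n, Pnew k n * w n * D (x n) (cstar P k)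
      = (∑ n, P k n * w n * D (x n) (cstar P k))
        + ((if k = a then -(α * w g * D (x g) (cstar P a)) else 0)
          + (if k = b then α * w g * D (x g) (cstar P b) else 0)) := by
    intro k
    by_cases hka : k = a
    · subst hka
      have : ∀ n, Pnew k n * w n * D (x n) (cstar P k)
          = P k n * w n * D (x n) (cstar P k)
            - (if n = g then α * w n * D (x n) (cstar P k) else 0) := by
        intro n; rw [hPa]; by_cases h : n = g <;> simp [h] <;> ring
      simp only [this]
      rw [Finset.sum_sub_distrib]
      have hne : ¬ (k = b) := hab
      simp [hne, sub_eq_add_neg]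
    by_cases hkb : k = b
    · subst hkb
      have : ∀ n, Pnew k n * w n * D (x n) (cstar P k)
          = P k n * w n * D (x n) (cstar P k)
            + (if n = g then α * w n * D (x n) (cstar P k) else 0) := by
        intro n; rw [hPb]; by_cases h : n = g <;> simp [h] <;> ring
      simp only [this]
      rw [Finset.sum_add_distrib]
      simp [hka]
    · have : ∀ n, Pnew k n = P k n := hPother k hka hkb
      simp [this, hka, hkb]
  have hcross : ∑ k, ∑ n, Pnew k n * w n * D (x n) (cstar P k) = F P := by
    rw [hF]
    simp only [hrow]
    rw [Finset.sum_add_distrib, Finset.sum_add_distrib]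
    have e1 : ∑ k, (if k = a then -(α * w g * D (x g) (cstar P a)) else 0)
        = -(α * w g * D (x g) (cstar P a)) := by simp
    have e2 : ∑ k, (if k = b then α * w g * D (x g) (cstar P b) else 0)
        = α * w g * D (x g) (cstar P b) := by simp
    rw [e1, e2, htie]
    ring
  -- assemble
  have hFP : F P = F Pnew
      + (s Pnew a * D (cstar Pnew a) (cstar P a)
        + s Pnew b * D (cstar Pnew b) (cstar P b)) := by
    rw [← hcross]
    have step1 : ∑ k, ∑ n, Pnew k n * w n * D (x n) (cstar P k)
        = (∑ k, ∑ n, Pnew k n * w n * D (x n) (cstar Pnew k))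
          + ∑ k, s Pnew k * D (cstar Pnew k) (cstar P k) := by
      rw [← Finset.sum_add_distrib]
      exact Finset.sum_congr rfl fun k _ => hsplit k
    rw [step1, ← hF]
    congr 1
    have hterm : ∀ k, s Pnew k * D (cstar Pnew k) (cstar P k)
        = (if k = a then s Pnew a * D (cstar Pnew a) (cstar P a) else 0)
          + (if k = b then s Pnew b * D (cstar Pnew b) (cstar P b) else 0) := by
      intro k
      by_cases hka : k = a
      · subst hka; simp [hab]
      by_cases hkb : k = b
      · subst hkb; simp [hka]
      · rw [hcother k hka hkb, hDzero]; simp [hka, hkb]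
    rw [Finset.sum_congr rfl fun k _ => hterm k, Finset.sum_add_distrib]
    simp
  constructor
  · rw [hFP, hsa.symm, hsb.symm]
    ring
  · rw [hFP]
    have h1 : 0 < s Pnew a * D (cstar Pnew a) (cstar P a) := mul_pos hsa_pos hDa_pos
    have h2 : 0 < s Pnew b * D (cstar Pnew b) (cstar P b) := mul_pos hsb_pos hDb_pos
    linarith
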